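/- Let a > 0 and let P be a probability distribution supported on [-a, a]. Then ∫ exp(-x²) dP(x) ≤ exp( -(∫ x dP(x))² + (a² - 1/2)₊ ), where (y)₊ = max(y, 0). -/

import Mathlib

open MeasureTheory

/-- derivative of `exp (-x²)` -/
lemma hasDerivAt_exp_neg_sq (y : ℝ) :
    HasDerivAt (fun y : ℝ => Real.exp (-y ^ 2)) (-2 * y * Real.exp (-y ^ 2)) y := by
  have h1 : HasDerivAt (fun y : ℝ => -y ^ 2) (-(2 * y)) y := by
    simpa using (hasDerivAt_pow 2 y).fun_neg
  have h2 := (Real.hasDerivAt_exp (-y ^ 2)).comp y h1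
  refine h2.congr_deriv ?_
  ring

/-- Taylor-type pointwise bound with curvature constant `B`. -/
lemma key_pointwise (a B m : ℝ)
    (hB : ∀ ξ : ℝ, ξ ∈ Set.Icc (-a) a → (4 * ξ ^ 2 - 2) * Real.exp (-ξ ^ 2) ≤ B)
    (hm : m ∈ Set.Icc (-a) a) (x : ℝ) (hx : x ∈ Set.Icc (-a) a) :
    Real.exp (-x ^ 2) ≤
      Real.exp (-m ^ 2) + (-2 * m * Real.exp (-m ^ 2)) * (x - m) + B / 2 * (x - m) ^ 2 := by
  set g : ℝ → ℝ := fun y =>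
    Real.exp (-m ^ 2) + (-2 * m * Real.exp (-m ^ 2)) * (y - m) + B / 2 * (y - m) ^ 2
      - Real.exp (-y ^ 2) with hgdef
  set G : ℝ → ℝ := fun y =>
    (-2 * m * Real.exp (-m ^ 2)) + B * (y - m) + 2 * y * Real.exp (-y ^ 2) with hGdef
  have hg : ∀ y : ℝ, HasDerivAt g (G y) y := by
    intro y
    have h1 : HasDerivAt (fun y : ℝ => (-2 * m * Real.exp (-m ^ 2)) * (y - m))
        (-2 * m * Real.exp (-m ^ 2)) y := by
      simpa using ((hasDerivAt_id y).sub_const m).const_mul (-2 * m * Real.exp (-m ^ 2))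
    have h2 : HasDerivAt (fun y : ℝ => B / 2 * (y - m) ^ 2) (B * (y - m)) y := by
      have := (((hasDerivAt_id y).sub_const m).pow 2).const_mul (B / 2)
      refine this.congr_deriv ?_
      simp only [id_eq]
      ring
    have := ((hasDerivAt_const y (Real.exp (-m ^ 2))).add h1).add h2 |>.sub
      (hasDerivAt_exp_neg_sq y)
    refine this.congr_deriv ?_
    ring
  have hG : ∀ y : ℝ, HasDerivAt G (B + (2 - 4 * y ^ 2) * Real.exp (-y ^ 2)) y := by
    intro y
    have h1 : HasDerivAt (fun y : ℝ => B * (y - m)) B y := by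
      simpa using ((hasDerivAt_id y).sub_const m).const_mul B
    have h2 : HasDerivAt (fun y : ℝ => 2 * y * Real.exp (-y ^ 2))
        (2 * Real.exp (-y ^ 2) + 2 * y * (-2 * y * Real.exp (-y ^ 2))) y := by
      have hu : HasDerivAt (fun y : ℝ => 2 * y) 2 y := by
        simpa using (hasDerivAt_id y).const_mul 2
      exact hu.mul (hasDerivAt_exp_neg_sq y)
    have := ((hasDerivAt_const y (-2 * m * Real.exp (-m ^ 2))).add h1).add h2
    refine this.congr_deriv ?_ <;> ring
  have hGmono : MonotoneOn G (Set.Icc (-a) a) := by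
    apply monotoneOn_of_deriv_nonneg (convex_Icc _ _)
      (fun y _ => (hG y).continuousAt.continuousWithinAt)
      (fun y _ => (hG y).differentiableAt.differentiableWithinAt)
    intro y hy
    rw [(hG y).deriv]
    have := hB y (interior_subset hy)
    linarith
  have hGm : G m = 0 := by simp only [hGdef]; ring
  have hgm : g m = 0 := by simp only [hgdef]; ring
  have hkey : 0 ≤ g x := by
    rcases le_total m x with hmx | hxm
    · have hmono : MonotoneOn g (Set.Icc m x) := by
        apply monotoneOn_of_deriv_nonneg (convex_Icc _ _)
          (fun y _ => (hg y).continuousAt.continuousWithinAt)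
          (fun y _ => (hg y).differentiableAt.differentiableWithinAt)
        intro y hy
        rw [interior_Icc] at hy
        rw [(hg y).deriv]
        have hy' : y ∈ Set.Icc (-a) a := ⟨le_trans hm.1 hy.1.le, le_trans hy.2.le hx.2⟩
        have := hGmono hm hy' hy.1.le
        linarith [hGm ▸ this]
      have := hmono (Set.left_mem_Icc.2 hmx) (Set.right_mem_Icc.2 hmx) hmx
      linarith [hgm ▸ this]
    · have hmono : AntitoneOn g (Set.Icc x m) := by
        apply antitoneOn_of_deriv_nonpos (convex_Icc _ _)
          (fun y _ => (hg y).continuousAt.continuousWithinAt)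
          (fun y _ => (hg y).differentiableAt.differentiableWithinAt)
        intro y hy
        rw [interior_Icc] at hy
        rw [(hg y).deriv]
        have hy' : y ∈ Set.Icc (-a) a := ⟨le_trans hx.1 hy.1.le, le_trans hy.2.le hm.2⟩
        have := hGmono hy' hm hy.2.le
        linarith [hGm ▸ this]
      have := hmono (Set.left_mem_Icc.2 hxm) (Set.right_mem_Icc.2 hxm) hxm
      linarith [hgm ▸ this]
  simp only [hgdef] at hkey
  linarith

/-- curvature bound -/
lemma curvature_bound (a : ℝ) (ξ : ℝ) (hξ : ξ ∈ Set.Icc (-a) a) :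
    (4 * ξ ^ 2 - 2) * Real.exp (-ξ ^ 2) ≤
      2 * Real.exp 1 * Real.exp (-a ^ 2) * (Real.exp (max (a ^ 2 - 1 / 2) 0) - 1) := by
  have hc0 : 0 ≤ max (a ^ 2 - 1 / 2) 0 := le_max_right _ _
  have hec : 1 ≤ Real.exp (max (a ^ 2 - 1 / 2) 0) := by
    simpa using Real.exp_le_exp.2 hc0
  have hu : ξ ^ 2 ≤ a ^ 2 := by
    have h1 := abs_le.2 ⟨hξ.1, hξ.2⟩
    nlinarith [abs_nonneg ξ, sq_abs ξ, sq_abs a, abs_nonneg a]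
  have hRHS0 : 0 ≤ 2 * Real.exp 1 * Real.exp (-a ^ 2) * (Real.exp (max (a ^ 2 - 1 / 2) 0) - 1) :=
    mul_nonneg (mul_nonneg (mul_nonneg (by norm_num) (Real.exp_pos 1).le)
      (Real.exp_pos (-a ^ 2)).le) (by linarith)
  rcases le_total (ξ ^ 2) (1 / 2) with h | h
  · have : (4 * ξ ^ 2 - 2) * Real.exp (-ξ ^ 2) ≤ 0 := by
      have := Real.exp_pos (-ξ ^ 2)
      nlinarith
    linarith
  · -- ξ² ≥ 1/2, hence a² ≥ 1/2 and the max is a² - 1/2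
    have ha2 : (1 : ℝ) / 2 ≤ a ^ 2 := le_trans h hu
    have hmax : max (a ^ 2 - 1 / 2) 0 = a ^ 2 - 1 / 2 := max_eq_left (by linarith)
    rw [hmax]
    set w : ℝ := ξ ^ 2 - 1 / 2 with hw
    have hw0 : 0 ≤ w := by simp [hw]; linarith
    have he2 : (2 : ℝ) ≤ Real.exp 1 := by
      have := Real.add_one_le_exp (1 : ℝ)
      linarith
    have hexpw : w + 1 ≤ Real.exp w := Real.add_one_le_exp w
    have hprod : Real.exp w * Real.exp (-ξ ^ 2) = Real.exp (-(1 : ℝ) / 2) := by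
      rw [← Real.exp_add]; congr 1; simp [hw]; ring
    have hprod2 : Real.exp (-a ^ 2) * Real.exp (a ^ 2 - 1 / 2) = Real.exp (-(1 : ℝ) / 2) := by
      rw [← Real.exp_add]; congr 1; ring
    -- (4u-2) e^{-u} = 4w e^{-u} ≤ 2e (e^{-1/2} - e^{-u}) ≤ 2e(e^{-1/2} - e^{-a²})
    have hmono : Real.exp (-a ^ 2) ≤ Real.exp (-ξ ^ 2) := Real.exp_le_exp.2 (by linarith)
    have hstep1 : (4 * ξ ^ 2 - 2) * Real.exp (-ξ ^ 2) ≤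
        2 * Real.exp 1 * (Real.exp (-(1 : ℝ) / 2) - Real.exp (-ξ ^ 2)) := by
      have hx := Real.exp_pos (-ξ ^ 2)
      have hA : 4 * w ≤ 2 * Real.exp 1 * (Real.exp w - 1) := by nlinarith
      have hB' : (4 * ξ ^ 2 - 2) * Real.exp (-ξ ^ 2) = 4 * w * Real.exp (-ξ ^ 2) := by
        rw [hw]; ring
      have hC : 2 * Real.exp 1 * (Real.exp (-(1 : ℝ) / 2) - Real.exp (-ξ ^ 2)) =
          2 * Real.exp 1 * (Real.exp w - 1) * Real.exp (-ξ ^ 2) := by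
        rw [← hprod]; ring
      rw [hB', hC]
      exact mul_le_mul_of_nonneg_right hA hx.le
    have hstep2 : 2 * Real.exp 1 * (Real.exp (-(1 : ℝ) / 2) - Real.exp (-ξ ^ 2)) ≤
        2 * Real.exp 1 * (Real.exp (-(1 : ℝ) / 2) - Real.exp (-a ^ 2)) := by
      have := Real.exp_pos (1 : ℝ)
      nlinarith
    have hrw : 2 * Real.exp 1 * Real.exp (-a ^ 2) * (Real.exp (a ^ 2 - 1 / 2) - 1) =
        2 * Real.exp 1 * (Real.exp (-(1 : ℝ) / 2) - Real.exp (-a ^ 2)) := by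
      rw [mul_sub, mul_sub]
      rw [mul_assoc (2 * Real.exp 1)]
      rw [hprod2]
      ring
    rw [hrw]
    linarith

set_option maxHeartbeats 2000000 in
theorem integral_exp_neg_sq_le (a : ℝ) (ha : 0 < a) (P : Measure ℝ)
    [IsProbabilityMeasure P] (hsupp : P (Set.Icc (-a) a) = 1) :
    ∫ x, Real.exp (-x ^ 2) ∂P ≤
      Real.exp (-(∫ x, x ∂P) ^ 2 + max (a ^ 2 - 1 / 2) 0) := by
  have hae : ∀ᵐ x ∂P, x ∈ Set.Icc (-a) a := by
    have hcompl : P (Set.Icc (-a) a)ᶜ = 0 := by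
      rw [measure_compl measurableSet_Icc (measure_ne_top _ _), hsupp, measure_univ]
      simp
    exact mem_ae_iff.mpr hcompl
  set m : ℝ := ∫ x, x ∂P with hmdef
  set c : ℝ := max (a ^ 2 - 1 / 2) 0 with hcdef
  set B : ℝ := 2 * Real.exp 1 * Real.exp (-a ^ 2) * (Real.exp c - 1) with hBdef
  have hc0 : 0 ≤ c := le_max_right _ _
  have hec : 1 ≤ Real.exp c := by simpa using Real.exp_le_exp.2 hc0
  have hB0 : 0 ≤ B := by
    rw [hBdef]
    exact mul_nonneg (mul_nonneg (mul_nonneg (by norm_num) (Real.exp_pos 1).le)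
      (Real.exp_pos (-a ^ 2)).le) (by linarith)
  -- integrability
  have hint_id : Integrable (fun x : ℝ => x) P := by
    refine (integrable_const a).mono' aestronglyMeasurable_id ?_
    filter_upwards [hae] with x hx
    rw [Real.norm_eq_abs]
    exact abs_le.2 ⟨hx.1, hx.2⟩
  have hxsq_le : ∀ᵐ x ∂P, x ^ 2 ≤ a ^ 2 := by
    filter_upwards [hae] with x hx
    have h1 := abs_le.2 ⟨hx.1, hx.2⟩
    nlinarith [abs_nonneg x, sq_abs x, sq_abs a]
  have hint_sq : Integrable (fun x : ℝ => x ^ 2) P := by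
    refine (integrable_const (a ^ 2)).mono' ?_ ?_
    · exact (continuous_pow 2).aestronglyMeasurable
    · filter_upwards [hxsq_le] with x hx
      rwa [Real.norm_eq_abs, abs_of_nonneg (sq_nonneg x)]
  have hint_exp : Integrable (fun x : ℝ => Real.exp (-x ^ 2)) P := by
    refine (integrable_const (1 : ℝ)).mono' ?_ ?_
    · exact (Real.continuous_exp.comp (continuous_pow 2).neg).aestronglyMeasurable
    · refine Filter.Eventually.of_forall fun x => ?_
      rw [Real.norm_eq_abs, abs_of_pos (Real.exp_pos _)]
      exact Real.exp_le_one_iff.2 (by nlinarith [sq_nonneg x])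
  have hint_xm : Integrable (fun x : ℝ => x - m) P := hint_id.sub (integrable_const m)
  have hint_lin : Integrable (fun x : ℝ => x ^ 2 - 2 * m * x) P :=
    hint_sq.sub (hint_id.const_mul (2 * m))
  have hint_sm : Integrable (fun x : ℝ => (x - m) ^ 2) P := by
    have hfun : (fun x : ℝ => (x - m) ^ 2) = fun x : ℝ => (x ^ 2 - 2 * m * x) + m ^ 2 := by
      funext x; ring
    rw [hfun]
    exact hint_lin.add (integrable_const _)
  -- mean in [-a, a]
  have hm_le : m ≤ a := by
    have := integral_mono_ae hint_id (integrable_const a)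
      (by filter_upwards [hae] with x hx; exact hx.2)
    simpa using this
  have hm_ge : -a ≤ m := by
    have := integral_mono_ae (integrable_const (-a)) hint_id
      (by filter_upwards [hae] with x hx; exact hx.1)
    simpa using this
  have hm_mem : m ∈ Set.Icc (-a) a := ⟨hm_ge, hm_le⟩
  have hm_sq : m ^ 2 ≤ a ^ 2 := by
    have h1 := abs_le.2 ⟨hm_ge, hm_le⟩
    nlinarith [abs_nonneg m, sq_abs m, sq_abs a]
  -- RHS integrable
  have hint_aff : Integrable
      (fun x : ℝ => Real.exp (-m ^ 2) + -2 * m * Real.exp (-m ^ 2) * (x - m)) P :=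
    (integrable_const _).add (hint_xm.const_mul _)
  have hint_rhs : Integrable (fun x : ℝ =>
      Real.exp (-m ^ 2) + -2 * m * Real.exp (-m ^ 2) * (x - m) + B / 2 * (x - m) ^ 2) P :=
    hint_aff.add (hint_sm.const_mul (B / 2))
  -- pointwise a.e. bound and integrate
  have hstep1 : ∫ x, Real.exp (-x ^ 2) ∂P ≤
      ∫ x, (Real.exp (-m ^ 2) + -2 * m * Real.exp (-m ^ 2) * (x - m)
        + B / 2 * (x - m) ^ 2) ∂P := by
    refine integral_mono_ae hint_exp hint_rhs ?_
    filter_upwards [hae] with x hx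
    have := key_pointwise a B m (fun ξ hξ => curvature_bound a ξ hξ) hm_mem x hx
    linarith
  -- compute the RHS integral
  have hIsub : ∫ x, (x - m) ∂P = 0 := by
    rw [integral_sub hint_id (integrable_const m), integral_const]
    simp [hmdef]
  have hIsm : ∫ x, (x - m) ^ 2 ∂P = (∫ x, x ^ 2 ∂P) - m ^ 2 := by
    have hfun : ∀ x : ℝ, (x - m) ^ 2 = (x ^ 2 - 2 * m * x) + m ^ 2 := fun x => by ring
    simp_rw [hfun]
    rw [integral_add hint_lin (integrable_const _),
      integral_sub hint_sq (hint_id.const_mul (2 * m)), integral_const_mul _ _, integral_const]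
    simp [← hmdef]
    ring
  have hIrhs : ∫ x, (Real.exp (-m ^ 2) + -2 * m * Real.exp (-m ^ 2) * (x - m)
      + B / 2 * (x - m) ^ 2) ∂P
      = Real.exp (-m ^ 2) + B / 2 * ((∫ x, x ^ 2 ∂P) - m ^ 2) := by
    rw [integral_add hint_aff (hint_sm.const_mul (B / 2)),
      integral_add (integrable_const _) (hint_xm.const_mul _),
      integral_const_mul _ _, integral_const_mul _ _, hIsub, hIsm, integral_const]
    simp
  have hIx2 : ∫ x, x ^ 2 ∂P ≤ a ^ 2 := by
    have := integral_mono_ae hint_sq (integrable_const (a ^ 2)) hxsq_le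
    simpa using this
  have hIx2' : m ^ 2 ≤ ∫ x, x ^ 2 ∂P := by
    have hvar : 0 ≤ ∫ x, (x - m) ^ 2 ∂P := integral_nonneg fun x => sq_nonneg _
    rw [hIsm] at hvar
    linarith
  -- final scalar inequality
  have hfinal : Real.exp (-m ^ 2) + B / 2 * (a ^ 2 - m ^ 2) ≤ Real.exp (-m ^ 2 + c) := by
    set w : ℝ := a ^ 2 - m ^ 2 with hwdef
    have hw0 : 0 ≤ w := by simp [hwdef]; linarith
    have h1 : Real.exp 1 * w ≤ Real.exp w := by
      have h2 := Real.add_one_le_exp (w - 1)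
      have h3 : Real.exp (w - 1) * Real.exp 1 = Real.exp w := by
        rw [← Real.exp_add]; ring_nf
      nlinarith [Real.exp_pos (1 : ℝ)]
    have h4 : Real.exp w * Real.exp (-a ^ 2) = Real.exp (-m ^ 2) := by
      rw [← Real.exp_add]; congr 1; simp [hwdef]; ring
    have h5 : Real.exp (-m ^ 2 + c) = Real.exp (-m ^ 2) * Real.exp c := by
      rw [← Real.exp_add]
    rw [h5, hBdef]
    have h6 : Real.exp 1 * w * Real.exp (-a ^ 2) ≤ Real.exp (-m ^ 2) := by
      calc Real.exp 1 * w * Real.exp (-a ^ 2) ≤ Real.exp w * Real.exp (-a ^ 2) :=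
        mul_le_mul_of_nonneg_right h1 (Real.exp_pos _).le
      _ = Real.exp (-m ^ 2) := h4
    nlinarith [mul_le_mul_of_nonneg_right h6 (by linarith : (0:ℝ) ≤ Real.exp c - 1)]
  calc ∫ x, Real.exp (-x ^ 2) ∂P
      ≤ Real.exp (-m ^ 2) + B / 2 * ((∫ x, x ^ 2 ∂P) - m ^ 2) := by rw [← hIrhs]; exact hstep1
    _ ≤ Real.exp (-m ^ 2) + B / 2 * (a ^ 2 - m ^ 2) := by nlinarith
    _ ≤ Real.exp (-m ^ 2 + c) := hfinal
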